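/- Let 0 ≤ R₀ < R₁, let a : ℤ → ℂ be a family of coefficients such that for every r with R₀ < r < R₁ the family (n ↦ ‖a(n)‖·rⁿ) is summable over ℤ, and let G(z) = ∑_{n∈ℤ} a(n)·zⁿ for z in the annulus A(R₀,R₁) = {z ∈ ℂ : R₀ < |z| < R₁}. Then for every r with R₀ < r < R₁, ∫₀^{2π} ‖G(r·e^{iθ})‖² dθ = 2π·∑_{n∈ℤ} ‖a(n)‖²·r^{2n}. -/

import Mathlib

set_option maxHeartbeats 1000000


open Complex Real AddCircle

open MeasureTheory in
/-- Parseval-type identity for a Laurent series on an annulus: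
`∫₀^{2π} ‖G(r e^{iθ})‖² dθ = 2π ∑_{n∈ℤ} ‖a n‖² r^{2n}`. -/
theorem stmt_3 (R₀ R₁ : ℝ) (hR₀ : 0 ≤ R₀) (hR : R₀ < R₁) (a : ℤ → ℂ)
    (ha : ∀ r : ℝ, R₀ < r → r < R₁ → Summable (fun n : ℤ => ‖a n‖ * r ^ n))
    (G : ℂ → ℂ)
    (hG : ∀ z : ℂ, R₀ < ‖z‖ → ‖z‖ < R₁ →
      G z = ∑' n : ℤ, a n * z ^ n) :
    ∀ r : ℝ, R₀ < r → r < R₁ →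
      ∫ θ in (0:ℝ)..(2 * π), ‖G ((r : ℂ) * Complex.exp (θ * Complex.I))‖ ^ 2
        = 2 * π * ∑' n : ℤ, ‖a n‖ ^ 2 * r ^ (2 * n) := by
  intro r hr₀ hr₁
  have hrpos : 0 < r := lt_of_le_of_lt hR₀ hr₀
  haveI : Fact (0 < 2 * π) := ⟨by positivity⟩
  set c : ℤ → ℂ := fun n => a n * (r : ℂ) ^ n with hcdef
  have hnormc : ∀ n : ℤ, ‖c n‖ = ‖a n‖ * r ^ n := by
    intro n
    simp only [hcdef, norm_mul, norm_zpow, Complex.norm_real, Real.norm_eq_abs,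
      abs_of_pos hrpos]
  have hc : Summable (fun n => ‖c n‖) := by
    simpa only [hnormc] using ha r hr₀ hr₁
  have hFs : Summable (fun n : ℤ => c n • (fourier n : C(AddCircle (2 * π), ℂ))) := by
    apply Summable.of_norm
    simpa only [norm_smul, fourier_norm, mul_one] using hc
  set F : C(AddCircle (2 * π), ℂ) := ∑' n : ℤ, c n • fourier n with hFdef
  have hFsum : HasSum (fun n : ℤ => c n • (fourier n : C(AddCircle (2 * π), ℂ))) F :=
    hFs.hasSum
  -- pointwise identification with G
  have hterm : ∀ (n : ℤ) (θ : ℝ),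
      c n • fourier n (θ : AddCircle (2 * π)) =
        a n * ((r : ℂ) * Complex.exp (θ * Complex.I)) ^ n := by
    intro n θ
    have h2π : (2 * π : ℂ) ≠ 0 := by
      simp only [Ne, mul_eq_zero, not_or]
      exact ⟨two_ne_zero, Complex.ofReal_ne_zero.mpr Real.pi_ne_zero⟩
    have hfour : fourier n (θ : AddCircle (2 * π)) = Complex.exp (θ * Complex.I) ^ n := by
      rw [fourier_coe_apply, ← Complex.exp_int_mul]
      congr 1
      push_cast
      field_simp
    rw [hfour, smul_eq_mul, hcdef, mul_zpow]
    ring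
  have hFpt : ∀ θ : ℝ, F (θ : AddCircle (2 * π)) =
      G ((r : ℂ) * Complex.exp (θ * Complex.I)) := by
    intro θ
    have h1 : HasSum (fun n : ℤ => c n • fourier n (θ : AddCircle (2 * π)))
        (F (θ : AddCircle (2 * π))) := by
      convert (ContinuousMap.evalCLM ℂ (θ : AddCircle (2 * π))).hasSum hFsum
      all_goals rfl
    have habs : ‖(r : ℂ) * Complex.exp (θ * Complex.I)‖ = r := by
      rw [norm_mul, Complex.norm_exp]
      simp [abs_of_pos hrpos]
    rw [hG _ (by rw [habs]; exact hr₀) (by rw [habs]; exact hr₁)]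
    rw [← h1.tsum_eq]
    exact tsum_congr fun n => hterm n θ
  -- Fourier coefficients of F
  have hcoeff : ∀ m : ℤ, fourierCoeff (F : AddCircle (2 * π) → ℂ) m = c m := by
    intro m
    set L : C(AddCircle (2 * π), ℂ) →L[ℂ] ℂ :=
      ((innerSL ℂ (fourierLp (T := 2 * π) 2 m)).comp
        (ContinuousMap.toLp (E := ℂ) 2 haarAddCircle ℂ)) with hLdef
    have hLF : L F = fourierCoeff (F : AddCircle (2 * π) → ℂ) m := by
      rw [← fourierCoeff_toLp]
      rw [← fourierBasis_repr]
      rw [HilbertBasis.repr_apply_apply]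
      simp only [hLdef, ContinuousLinearMap.comp_apply, innerSL_apply_apply]
      congr 1
      exact (congrFun coe_fourierBasis m).symm
    have hLn : ∀ n : ℤ, L (c n • fourier n) = if n = m then c n else 0 := by
      intro n
      have horth := orthonormal_iff_ite.mp (orthonormal_fourier (T := 2 * π)) m n
      simp only [hLdef, ContinuousLinearMap.comp_apply, _root_.map_smul, innerSL_apply_apply,
        inner_smul_right]
      have : (ContinuousMap.toLp (E := ℂ) 2 (haarAddCircle (T := 2 * π)) ℂ) (fourier n) = fourierLp 2 n := rfl
      rw [this, horth]
      by_cases h : m = n <;> simp [h, eq_comm]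
    have hs : HasSum (fun n : ℤ => L (c n • fourier n))
        (fourierCoeff (F : AddCircle (2 * π) → ℂ) m) := hLF ▸ L.hasSum hFsum
    simp only [hLn] at hs
    have hs' : HasSum (fun n : ℤ => if n = m then c n else 0) (c m) := by
      convert hasSum_ite_eq m (c m) using 2 with n
      by_cases h : n = m <;> simp [h]
    exact hs.unique hs'
  -- Parseval
  have hpar := tsum_sq_fourierCoeff (ContinuousMap.toLp (E := ℂ) 2 haarAddCircle ℂ F)
  have hLHS : (∑' i : ℤ,
      ‖fourierCoeff (⇑(ContinuousMap.toLp (E := ℂ) 2 haarAddCircle ℂ F)) i‖ ^ 2)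
      = ∑' n : ℤ, ‖a n‖ ^ 2 * r ^ (2 * n) := by
    refine tsum_congr fun n => ?_
    rw [fourierCoeff_toLp, hcoeff, hnormc, mul_pow]
    congr 1
    rw [← zpow_natCast (r ^ n) 2, ← zpow_mul]
    norm_num [mul_comm n 2]
  have hRHS : (∫ t, ‖(ContinuousMap.toLp (E := ℂ) 2 haarAddCircle ℂ F) t‖ ^ 2 ∂haarAddCircle)
      = ∫ t, ‖F t‖ ^ 2 ∂haarAddCircle := by
    apply integral_congr_ae
    filter_upwards [ContinuousMap.coeFn_toLp (p := 2) (𝕜 := ℂ) haarAddCircle F] with t ht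
    rw [ht]
  calc (∫ θ in (0:ℝ)..(2 * π), ‖G ((r : ℂ) * Complex.exp (θ * Complex.I))‖ ^ 2)
      = ∫ θ in (0:ℝ)..(0 + 2 * π), ‖F (θ : AddCircle (2 * π))‖ ^ 2 := by
        rw [zero_add]
        exact intervalIntegral.integral_congr fun θ _ => by rw [hFpt θ]
    _ = ∫ t : AddCircle (2 * π), ‖F t‖ ^ 2 :=
        AddCircle.intervalIntegral_preimage (2 * π) 0 (fun t => ‖F t‖ ^ 2)
    _ = 2 * π * ∫ t, ‖F t‖ ^ 2 ∂haarAddCircle := by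
        rw [volume_eq_smul_haarAddCircle, integral_smul_measure,
          ENNReal.toReal_ofReal (by positivity), smul_eq_mul]
    _ = 2 * π * ∑' n : ℤ, ‖a n‖ ^ 2 * r ^ (2 * n) := by
        rw [← hRHS, ← hpar, hLHS]
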